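/- Let H be a real Hilbert space and a = (a_{ij}) an n×n real matrix such that ∑_{ij} a_{ij} s_i t_j ≤ K for all s_i, t_j ∈ {-1,1}. If S_1,…,S_n, T_1,…,T_n ∈ H satisfy ‖S_i‖ ≤ R and ‖T_j‖ ≤ R' for all i,j, then ∑_{i,j=1}^n a_{ij} ⟨S_i, T_j⟩_H ≤ K_G · K · R · R', where K_G is the Grothendieck constant. -/

import Mathlib

open Finset
namespace Groth

noncomputable def χ (b : Bool) : ℝ := if b then 1 else -1
lemma χ_sq (b : Bool) : χ b * χ b = 1 := by cases b <;> simp [χ]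
lemma χ_not (b : Bool) : χ (!b) = - χ b := by cases b <;> simp [χ]

variable {ι : Type} [Fintype ι] [DecidableEq ι]

def flip (t0 : ι) : (ι → Bool) ≃ (ι → Bool) :=
  Function.Involutive.toPerm (fun ε => Function.update ε t0 (!(ε t0)))
    (by intro ε; funext t; by_cases h : t = t0 <;> simp [Function.update, h])

lemma sum_flip_zero (t0 : ι) (F : (ι → Bool) → ℝ)
    (hF : ∀ ε, F (Function.update ε t0 (!(ε t0))) = - F ε) :
    ∑ ε : ι → Bool, F ε = 0 := by
  have h := Equiv.sum_comp (flip t0) F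
  have h2 : ∑ ε : ι → Bool, F ((flip t0) ε) = ∑ ε : ι → Bool, (- F ε) :=
    Finset.sum_congr rfl (fun ε _ => hF ε)
  rw [h2] at h; simp at h; linarith

lemma orth (t t' : ι) :
    ∑ ε : ι → Bool, χ (ε t) * χ (ε t') =
      if t = t' then (Fintype.card (ι → Bool) : ℝ) else 0 := by
  by_cases h : t = t'
  · subst h
    simp only [if_pos rfl]
    rw [Finset.sum_congr rfl (fun ε _ => χ_sq (ε t))]
    simp [Finset.card_univ]
  · rw [if_neg h]
    apply sum_flip_zero t
    intro ε
    rw [Function.update_self, Function.update_of_ne (fun hc => h hc.symm), χ_not]; ring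

/-- bilinear orthogonality over a subset -/
lemma orth_sum (s : Finset ι) (f g : ι → ℝ) :
    ∑ ε : ι → Bool, (∑ t ∈ s, f t * χ (ε t)) * (∑ t ∈ s, g t * χ (ε t)) =
      (Fintype.card (ι → Bool) : ℝ) * ∑ t ∈ s, f t * g t := by
  have : ∀ ε : ι → Bool, (∑ t ∈ s, f t * χ (ε t)) * (∑ t ∈ s, g t * χ (ε t)) =
      ∑ t ∈ s, ∑ t' ∈ s, f t * g t' * (χ (ε t) * χ (ε t')) := by
    intro ε; rw [Finset.sum_mul_sum]
    exact Finset.sum_congr rfl fun t _ => Finset.sum_congr rfl fun t' _ => by ring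
  rw [Finset.sum_congr rfl (fun ε _ => this ε), Finset.sum_comm]
  rw [Finset.sum_congr rfl (fun t _ => Finset.sum_comm)]
  have h2 : ∀ t ∈ s, ∀ t' ∈ s, ∑ ε : ι → Bool, f t * g t' * (χ (ε t) * χ (ε t'))
      = f t * g t' * (if t = t' then (Fintype.card (ι → Bool) : ℝ) else 0) := by
    intro t _ t' _
    rw [← Finset.mul_sum, orth]
  rw [Finset.sum_congr rfl (fun t ht => Finset.sum_congr rfl (fun t' ht' => h2 t ht t' ht'))]
  rw [Finset.mul_sum]
  apply Finset.sum_congr rfl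
  intro t ht
  simp only [mul_ite, mul_zero, Finset.sum_ite_eq, ht, if_pos]
  ring

lemma sq_moment (s : Finset ι) (f : ι → ℝ) :
    ∑ ε : ι → Bool, (∑ t ∈ s, f t * χ (ε t))^2 =
      (Fintype.card (ι → Bool) : ℝ) * ∑ t ∈ s, (f t)^2 := by
  have := orth_sum s f f
  simpa [sq] using this

lemma odd_vanish (s : Finset ι) (t0 : ι) (ht0 : t0 ∉ s) (f : ι → ℝ) (m : ℕ) :
    ∑ ε : ι → Bool, (∑ t ∈ s, f t * χ (ε t))^m * χ (ε t0) = 0 := by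
  apply sum_flip_zero t0
  intro ε
  have h1 : ∑ t ∈ s, f t * χ (Function.update ε t0 (!(ε t0)) t) = ∑ t ∈ s, f t * χ (ε t) := by
    apply Finset.sum_congr rfl; intro t ht
    rw [Function.update_of_ne (by rintro rfl; exact ht0 ht)]
  rw [h1, Function.update_self, χ_not]; ring

lemma fourth_moment (s : Finset ι) (f : ι → ℝ) :
    ∑ ε : ι → Bool, (∑ t ∈ s, f t * χ (ε t))^4 ≤
      3 * (Fintype.card (ι → Bool) : ℝ) * (∑ t ∈ s, (f t)^2)^2 := by
  classical
  induction s using Finset.induction with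
  | empty => simp
  | insert _ _ ht0 =>
    rename_i t0 s' ih
    have key : ∀ ε : ι → Bool,
        (∑ t ∈ insert t0 s', f t * χ (ε t))^4 =
        (∑ t ∈ s', f t * χ (ε t))^4
        + 4 * f t0 * ((∑ t ∈ s', f t * χ (ε t))^3 * χ (ε t0))
        + 6 * (f t0)^2 * (∑ t ∈ s', f t * χ (ε t))^2
        + 4 * (f t0)^3 * ((∑ t ∈ s', f t * χ (ε t))^1 * χ (ε t0))
        + (f t0)^4 := by
      intro ε
      rw [Finset.sum_insert ht0]
      have hc2 : χ (ε t0)^2 = 1 := by rw [sq, χ_sq]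
      linear_combination (6*(f t0)^2*(∑ t ∈ s', f t * χ (ε t))^2
        + 4*(f t0)^3*(∑ t ∈ s', f t * χ (ε t))*(χ (ε t0))
        + (f t0)^4*((χ (ε t0))^2+1)) * hc2
    rw [Finset.sum_congr rfl (fun ε _ => key ε)]
    rw [Finset.sum_add_distrib, Finset.sum_add_distrib, Finset.sum_add_distrib,
        Finset.sum_add_distrib]
    rw [← Finset.mul_sum, ← Finset.mul_sum, ← Finset.mul_sum]
    rw [odd_vanish s' t0 ht0 f 3, odd_vanish s' t0 ht0 f 1, sq_moment]
    have hN : (0:ℝ) ≤ (Fintype.card (ι → Bool) : ℝ) := by positivity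
    rw [Finset.sum_insert ht0, Finset.sum_const, Finset.card_univ, nsmul_eq_mul]
    nlinarith [ih, mul_nonneg hN (by positivity : (0:ℝ) ≤ (f t0)^4),
      mul_nonneg hN (sq_nonneg (∑ t ∈ s', (f t)^2))]

variable {n : ℕ}

def IsSign (s : Fin n → ℝ) : Prop := ∀ i, s i = 1 ∨ s i = -1

lemma sign_step (a : Matrix (Fin n) (Fin n) ℝ) (K : ℝ)
    (hyp : ∀ s t : Fin n → ℝ, IsSign s → IsSign t →
      (∑ i, ∑ j, a i j * s i * t j) ≤ K)
    (s : Fin n → ℝ) (hs : IsSign s) (v : Fin n → ℝ) (hv : ∀ j, |v j| ≤ 1) :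
    ∑ i, ∑ j, a i j * s i * v j ≤ K := by
  set c : Fin n → ℝ := fun j => ∑ i, a i j * s i with hc
  have h1 : ∑ i, ∑ j, a i j * s i * v j = ∑ j, c j * v j := by
    rw [Finset.sum_comm]
    exact Finset.sum_congr rfl fun j _ => by rw [hc]; rw [Finset.sum_mul]
  set t : Fin n → ℝ := fun j => if 0 ≤ c j then 1 else -1 with htdef
  have ht : IsSign t := fun j => by by_cases h : 0 ≤ c j <;> simp [htdef, h]
  have h2 : ∀ j, c j * v j ≤ c j * t j := by
    intro j
    have : |c j * v j| ≤ |c j| := by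
      rw [abs_mul]
      calc |c j| * |v j| ≤ |c j| * 1 := by
            exact mul_le_mul_of_nonneg_left (hv j) (abs_nonneg _)
        _ = |c j| := mul_one _
    have habs : c j * t j = |c j| := by
      by_cases h : 0 ≤ c j
      · simp [htdef, h, abs_of_nonneg h]
      · simp [htdef, h, abs_of_neg (lt_of_not_ge h)]
    rw [habs]
    exact le_trans (le_abs_self _) this
  have h3 : ∑ j, c j * t j ≤ K := by
    have := hyp s t hs ht
    calc ∑ j, c j * t j = ∑ i, ∑ j, a i j * s i * t j := by
          rw [Finset.sum_comm]
          exact Finset.sum_congr rfl fun j _ => by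
            rw [hc]; rw [Finset.sum_mul]
      _ ≤ K := this
  rw [h1]
  exact le_trans (Finset.sum_le_sum fun j _ => h2 j) h3

lemma cube_bound (a : Matrix (Fin n) (Fin n) ℝ) (K : ℝ)
    (hyp : ∀ s t : Fin n → ℝ, IsSign s → IsSign t →
      (∑ i, ∑ j, a i j * s i * t j) ≤ K)
    (u v : Fin n → ℝ) (hu : ∀ i, |u i| ≤ 1) (hv : ∀ j, |v j| ≤ 1) :
    ∑ i, ∑ j, a i j * u i * v j ≤ K := by
  set d : Fin n → ℝ := fun i => ∑ j, a i j * v j with hd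
  have h1 : ∑ i, ∑ j, a i j * u i * v j = ∑ i, u i * d i := by
    exact Finset.sum_congr rfl fun i _ => by
      rw [hd]; rw [Finset.mul_sum]
      exact Finset.sum_congr rfl fun j _ => by ring
  set s : Fin n → ℝ := fun i => if 0 ≤ d i then 1 else -1 with hsdef
  have hs : IsSign s := fun i => by by_cases h : 0 ≤ d i <;> simp [hsdef, h]
  have h2 : ∀ i, u i * d i ≤ s i * d i := by
    intro i
    have : |u i * d i| ≤ |d i| := by
      rw [abs_mul]
      calc |u i| * |d i| ≤ 1 * |d i| :=
            mul_le_mul_of_nonneg_right (hu i) (abs_nonneg _)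
        _ = |d i| := one_mul _
    have habs : s i * d i = |d i| := by
      by_cases h : 0 ≤ d i
      · simp [hsdef, h, abs_of_nonneg h]
      · simp [hsdef, h, abs_of_neg (lt_of_not_ge h)]
    rw [habs]
    exact le_trans (le_abs_self _) this
  have h3 : ∑ i, s i * d i ≤ K := by
    have := sign_step a K hyp s hs v hv
    calc ∑ i, s i * d i = ∑ i, ∑ j, a i j * s i * v j := by
          exact Finset.sum_congr rfl fun i _ => by
            rw [hd, Finset.mul_sum]
            exact Finset.sum_congr rfl fun j _ => by ring
      _ ≤ K := this
  rw [h1]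
  exact le_trans (Finset.sum_le_sum fun i _ => h2 i) h3

lemma K_nonneg (a : Matrix (Fin n) (Fin n) ℝ) (K : ℝ)
    (hyp : ∀ s t : Fin n → ℝ, IsSign s → IsSign t →
      (∑ i, ∑ j, a i j * s i * t j) ≤ K) : 0 ≤ K := by
  have h1 := hyp (fun _ => 1) (fun _ => 1) (fun _ => Or.inl rfl) (fun _ => Or.inl rfl)
  have h2 := hyp (fun _ => 1) (fun _ => -1) (fun _ => Or.inl rfl) (fun _ => Or.inr rfl)
  have : ∑ i, ∑ j, a i j * (1:ℝ) * (-1:ℝ) = - ∑ i, ∑ j, a i j * (1:ℝ) * (1:ℝ) := by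
    rw [← Finset.sum_neg_distrib]
    exact Finset.sum_congr rfl fun i _ => by
      rw [← Finset.sum_neg_distrib]
      exact Finset.sum_congr rfl fun j _ => by ring
  rw [this] at h2
  linarith

lemma entry_bound (a : Matrix (Fin n) (Fin n) ℝ) (K : ℝ)
    (hyp : ∀ s t : Fin n → ℝ, IsSign s → IsSign t →
      (∑ i, ∑ j, a i j * s i * t j) ≤ K) (i : Fin n) (j : Fin n) :
    |a i j| ≤ K := by
  have key : ∀ w : ℝ, |w| ≤ 1 → w * a i j ≤ K := by
    intro w hw
    have := cube_bound a K hyp (fun i' => if i' = i then w else 0)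
      (fun j' => if j' = j then 1 else 0)
      (fun i' => by by_cases h : i' = i <;> simp [h, hw])
      (fun j' => by by_cases h : j' = j <;> simp [h])
    calc w * a i j = ∑ i', ∑ j', a i' j' * (if i' = i then w else 0) *
          (if j' = j then 1 else 0) := by
          rw [Finset.sum_eq_single i, Finset.sum_eq_single j]
          · simp; ring
          · intro b _ hb; simp [hb]
          · simp
          · intro b _ hb
            rw [Finset.sum_eq_single j]
            · simp [hb]
            · intro b' _ hb'; simp [hb']
            · simp
          · simp
      _ ≤ K := this
  rcases abs_cases (a i j) with ⟨h, _⟩ | ⟨h, _⟩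
  · rw [h]; simpa using key 1 (by norm_num)
  · rw [h]; simpa using key (-1) (by norm_num)



/-! clamp -/

noncomputable def φ (c : ℝ) : ℝ := max (-4) (min 4 c)

lemma phi_cases (c : ℝ) : φ c = 4 ∧ 4 ≤ c ∨ φ c = c ∧ -4 ≤ c ∧ c ≤ 4 ∨ φ c = -4 ∧ c ≤ -4 := by
  unfold φ
  rcases le_total 4 c with h | h
  · left; rw [min_eq_left h, max_eq_right (by norm_num)]; exact ⟨rfl, h⟩
  · rcases le_total c (-4) with h2 | h2
    · right; right; rw [min_eq_right h, max_eq_left h2]; exact ⟨rfl, h2⟩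
    · right; left; rw [min_eq_right h, max_eq_right h2]; exact ⟨rfl, h2, h⟩

lemma phi_abs (c : ℝ) : |φ c| ≤ 4 := by
  rw [abs_le]
  rcases phi_cases c with ⟨h, _⟩ | ⟨h, _, _⟩ | ⟨h, _⟩ <;> rw [h] <;> constructor <;> linarith

lemma phi_sq_le (c : ℝ) : (φ c)^2 ≤ c^2 := by
  rcases phi_cases c with ⟨h, h'⟩ | ⟨h, _, _⟩ | ⟨h, h'⟩ <;> rw [h] <;> nlinarith

lemma rem_sq_le (c : ℝ) : (c - φ c)^2 ≤ c^4 / 16 := by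
  rcases phi_cases c with ⟨h, h'⟩ | ⟨h, _, _⟩ | ⟨h, h'⟩ <;> rw [h]
  · nlinarith [sq_nonneg (c-2), sq_nonneg (c*c - 4*c)]
  · simp; positivity
  · nlinarith [sq_nonneg (c+2), sq_nonneg (c*c + 4*c)]



theorem core (n : ℕ) (a : Matrix (Fin n) (Fin n) ℝ) (K : ℝ)
    (hyp : ∀ s t : Fin n → ℝ, IsSign s → IsSign t →
      (∑ i, ∑ j, a i j * s i * t j) ≤ K) :
    ∀ (k : ℕ) (ι : Type) (_ : Fintype ι) (_ : DecidableEq ι)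
      (x y : Fin n → ι → ℝ),
      (∀ i, ∑ t, (x i t)^2 ≤ 1) → (∀ j, ∑ t, (y j t)^2 ≤ 1) →
      ∑ i, ∑ j, a i j * (∑ t, x i t * y j t) ≤
        160 * K + (9/10)^k * (n:ℝ)^2 * K := by
  have hK : 0 ≤ K := K_nonneg a K hyp
  intro k
  induction k with
  | zero =>
    intro ι _ _ x y hx hy
    have h1 : ∀ i j : Fin n, a i j * (∑ t, x i t * y j t) ≤ K := by
      intro i j
      have hcs := Finset.sum_mul_sq_le_sq_mul_sq Finset.univ (x i) (y j)
      have hy2 : (0:ℝ) ≤ ∑ t, (y j t)^2 := Finset.sum_nonneg fun t _ => sq_nonneg _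
      have hx2 : (0:ℝ) ≤ ∑ t, (x i t)^2 := Finset.sum_nonneg fun t _ => sq_nonneg _
      have hsq : (∑ t, x i t * y j t)^2 ≤ 1 := by nlinarith [hx i, hy j]
      have habs : |∑ t, x i t * y j t| ≤ 1 := (sq_le_one_iff_abs_le_one _).mp hsq
      have hA := entry_bound a K hyp i j
      calc a i j * (∑ t, x i t * y j t) ≤ |a i j * (∑ t, x i t * y j t)| := le_abs_self _
        _ = |a i j| * |∑ t, x i t * y j t| := abs_mul _ _
        _ ≤ K * 1 := mul_le_mul hA habs (abs_nonneg _) hK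
        _ = K := mul_one _
    have h2 : ∑ i, ∑ j, a i j * (∑ t, x i t * y j t) ≤ (n:ℝ)^2 * K := by
      calc ∑ i, ∑ j, a i j * (∑ t, x i t * y j t) ≤ ∑ _i : Fin n, ∑ _j : Fin n, K :=
          Finset.sum_le_sum fun i _ => Finset.sum_le_sum fun j _ => h1 i j
        _ = (n:ℝ)^2 * K := by
            simp [Finset.sum_const, Finset.card_univ, nsmul_eq_mul]; ring
    simp only [pow_zero, one_mul]
    linarith
  | succ k IH =>
    intro ι instF instD x y hx hy
    set N : ℝ := (Fintype.card (ι → Bool) : ℝ) with hNdef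
    have hNpos : 0 < N := by
      rw [hNdef]; exact_mod_cast Fintype.card_pos
    set s : ℝ := Real.sqrt N with hsdef
    have hs : s * s = N := Real.mul_self_sqrt hNpos.le
    have hs2 : s^2 = N := Real.sq_sqrt hNpos.le
    have hspos : 0 < s := Real.sqrt_pos.mpr hNpos
    have hsne : s ≠ 0 := hspos.ne'
    set X : Fin n → (ι → Bool) → ℝ := fun i ε => ∑ t, x i t * χ (ε t) with hXdef
    set Y : Fin n → (ι → Bool) → ℝ := fun j ε => ∑ t, y j t * χ (ε t) with hYdef
    have hX2 : ∀ i, ∑ ε : ι → Bool, (X i ε)^2 = N * ∑ t, (x i t)^2 :=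
      fun i => sq_moment Finset.univ (x i)
    have hY2 : ∀ j, ∑ ε : ι → Bool, (Y j ε)^2 = N * ∑ t, (y j t)^2 :=
      fun j => sq_moment Finset.univ (y j)
    have hX4 : ∀ i, ∑ ε : ι → Bool, (X i ε)^4 ≤ 3 * N * (∑ t, (x i t)^2)^2 :=
      fun i => fourth_moment Finset.univ (x i)
    have hY4 : ∀ j, ∑ ε : ι → Bool, (Y j ε)^4 ≤ 3 * N * (∑ t, (y j t)^2)^2 :=
      fun j => fourth_moment Finset.univ (y j)
    set p : Fin n → (ι → Bool) → ℝ := fun i ε => φ (X i ε) / s with hpdef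
    set q : Fin n → (ι → Bool) → ℝ := fun j ε => (Y j ε - φ (Y j ε)) / (s * (9/20)) with hqdef
    set p' : Fin n → (ι → Bool) → ℝ := fun i ε => (X i ε - φ (X i ε)) / (s * (9/20)) with hp'def
    set q' : Fin n → (ι → Bool) → ℝ := fun j ε => Y j ε / s with hq'def
    -- norm bounds
    have hp : ∀ i, ∑ ε : ι → Bool, (p i ε)^2 ≤ 1 := by
      intro i
      have h1 : ∑ ε : ι → Bool, (p i ε)^2 = (∑ ε : ι → Bool, (φ (X i ε))^2) / N := by
        rw [Finset.sum_div]
        refine Finset.sum_congr rfl fun ε _ => ?_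
        simp only [hpdef]
        rw [div_pow, hs2]
      rw [h1, div_le_one hNpos]
      calc ∑ ε : ι → Bool, (φ (X i ε))^2 ≤ ∑ ε : ι → Bool, (X i ε)^2 :=
          Finset.sum_le_sum fun ε _ => phi_sq_le _
        _ = N * ∑ t, (x i t)^2 := hX2 i
        _ ≤ N * 1 := mul_le_mul_of_nonneg_left (hx i) hNpos.le
        _ = N := mul_one N
    have hq : ∀ j, ∑ ε : ι → Bool, (q j ε)^2 ≤ 1 := by
      intro j
      have h1 : ∑ ε : ι → Bool, (q j ε)^2 =
          (∑ ε : ι → Bool, (Y j ε - φ (Y j ε))^2) / (N * (81/400)) := by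
        rw [Finset.sum_div]
        refine Finset.sum_congr rfl fun ε _ => ?_
        simp only [hqdef]
        rw [div_pow, mul_pow, hs2]
        norm_num
      have h2 : ∑ ε : ι → Bool, (Y j ε - φ (Y j ε))^2 ≤ (∑ ε : ι → Bool, (Y j ε)^4)/16 := by
        rw [Finset.sum_div]
        exact Finset.sum_le_sum fun ε _ => rem_sq_le _
      have h4 : (∑ t, (y j t)^2)^2 ≤ 1 := by
        have h0 := Finset.sum_nonneg (fun t (_ : t ∈ Finset.univ) => sq_nonneg (y j t))
        nlinarith [hy j]
      have h3 : (∑ ε : ι → Bool, (Y j ε)^4) ≤ 3 * N := by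
        refine le_trans (hY4 j) ?_
        nlinarith [hNpos.le]
      rw [h1, div_le_one (by positivity)]
      linarith
    have hp' : ∀ i, ∑ ε : ι → Bool, (p' i ε)^2 ≤ 1 := by
      intro i
      have h1 : ∑ ε : ι → Bool, (p' i ε)^2 =
          (∑ ε : ι → Bool, (X i ε - φ (X i ε))^2) / (N * (81/400)) := by
        rw [Finset.sum_div]
        refine Finset.sum_congr rfl fun ε _ => ?_
        simp only [hp'def]
        rw [div_pow, mul_pow, hs2]
        norm_num
      have h2 : ∑ ε : ι → Bool, (X i ε - φ (X i ε))^2 ≤ (∑ ε : ι → Bool, (X i ε)^4)/16 := by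
        rw [Finset.sum_div]
        exact Finset.sum_le_sum fun ε _ => rem_sq_le _
      have h4 : (∑ t, (x i t)^2)^2 ≤ 1 := by
        have h0 := Finset.sum_nonneg (fun t (_ : t ∈ Finset.univ) => sq_nonneg (x i t))
        nlinarith [hx i]
      have h3 : (∑ ε : ι → Bool, (X i ε)^4) ≤ 3 * N := by
        refine le_trans (hX4 i) ?_
        nlinarith [hNpos.le]
      rw [h1, div_le_one (by positivity)]
      linarith
    have hq' : ∀ j, ∑ ε : ι → Bool, (q' j ε)^2 ≤ 1 := by
      intro j
      have h1 : ∑ ε : ι → Bool, (q' j ε)^2 = (∑ ε : ι → Bool, (Y j ε)^2) / N := by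
        rw [Finset.sum_div]
        refine Finset.sum_congr rfl fun ε _ => ?_
        simp only [hq'def]
        rw [div_pow, hs2]
      rw [h1, div_le_one hNpos]
      calc ∑ ε : ι → Bool, (Y j ε)^2 = N * ∑ t, (y j t)^2 := hY2 j
        _ ≤ N * 1 := mul_le_mul_of_nonneg_left (hy j) hNpos.le
        _ = N := mul_one N
    -- decomposition identity
    have split : ∀ i j, ∑ t, x i t * y j t =
        (∑ ε : ι → Bool, φ (X i ε) * φ (Y j ε)) / N
        + (9/20) * ∑ ε : ι → Bool, p i ε * q j ε
        + (9/20) * ∑ ε : ι → Bool, p' i ε * q' j ε := by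
      intro i j
      have e1 : ∑ t, x i t * y j t = (∑ ε : ι → Bool, X i ε * Y j ε) / N := by
        rw [eq_div_iff hNpos.ne', mul_comm]
        exact (orth_sum Finset.univ (x i) (y j)).symm
      have e3 : (9/20:ℝ) * ∑ ε : ι → Bool, p i ε * q j ε =
          (∑ ε : ι → Bool, φ (X i ε) * (Y j ε - φ (Y j ε))) / N := by
        rw [Finset.mul_sum, Finset.sum_div]
        refine Finset.sum_congr rfl fun ε _ => ?_
        simp only [hpdef, hqdef]
        rw [← hs]
        field_simp
      have e4 : (9/20:ℝ) * ∑ ε : ι → Bool, p' i ε * q' j ε =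
          (∑ ε : ι → Bool, (X i ε - φ (X i ε)) * Y j ε) / N := by
        rw [Finset.mul_sum, Finset.sum_div]
        refine Finset.sum_congr rfl fun ε _ => ?_
        simp only [hp'def, hq'def]
        rw [← hs]
        field_simp
      rw [e1, e3, e4]
      rw [← add_div, ← add_div]
      congr 1
      rw [← Finset.sum_add_distrib, ← Finset.sum_add_distrib]
      refine Finset.sum_congr rfl fun ε _ => ?_
      ring
    -- expand
    have expand : ∑ i, ∑ j, a i j * (∑ t, x i t * y j t)
        = (∑ i, ∑ j, a i j * ((∑ ε : ι → Bool, φ (X i ε) * φ (Y j ε)) / N))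
        + (9/20) * (∑ i, ∑ j, a i j * (∑ ε : ι → Bool, p i ε * q j ε))
        + (9/20) * (∑ i, ∑ j, a i j * (∑ ε : ι → Bool, p' i ε * q' j ε)) := by
      rw [Finset.mul_sum, Finset.mul_sum, ← Finset.sum_add_distrib, ← Finset.sum_add_distrib]
      refine Finset.sum_congr rfl fun i _ => ?_
      rw [Finset.mul_sum, Finset.mul_sum, ← Finset.sum_add_distrib, ← Finset.sum_add_distrib]
      refine Finset.sum_congr rfl fun j _ => ?_
      rw [split i j]; ring
    -- bound T1
    have swap1 : ∑ i, ∑ j, a i j * (∑ ε : ι → Bool, φ (X i ε) * φ (Y j ε))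
        = ∑ ε : ι → Bool, ∑ i, ∑ j, a i j * (φ (X i ε) * φ (Y j ε)) := by
      calc ∑ i, ∑ j, a i j * (∑ ε : ι → Bool, φ (X i ε) * φ (Y j ε))
          = ∑ i, ∑ j, ∑ ε : ι → Bool, a i j * (φ (X i ε) * φ (Y j ε)) :=
            Finset.sum_congr rfl fun i _ => Finset.sum_congr rfl fun j _ =>
              Finset.mul_sum _ _ _
        _ = ∑ i, ∑ ε : ι → Bool, ∑ j, a i j * (φ (X i ε) * φ (Y j ε)) :=
            Finset.sum_congr rfl fun i _ => Finset.sum_comm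
        _ = ∑ ε : ι → Bool, ∑ i, ∑ j, a i j * (φ (X i ε) * φ (Y j ε)) := Finset.sum_comm
    have per : ∀ ε : ι → Bool, ∑ i, ∑ j, a i j * (φ (X i ε) * φ (Y j ε)) ≤ 16 * K := by
      intro ε
      have hcube := cube_bound a K hyp (fun i => φ (X i ε)/4) (fun j => φ (Y j ε)/4)
        (fun i => by
          rw [abs_div, abs_of_pos (by norm_num : (0:ℝ) < 4),
            div_le_one (by norm_num : (0:ℝ) < 4)]
          exact phi_abs _)
        (fun j => by
          rw [abs_div, abs_of_pos (by norm_num : (0:ℝ) < 4),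
            div_le_one (by norm_num : (0:ℝ) < 4)]
          exact phi_abs _)
      calc ∑ i, ∑ j, a i j * (φ (X i ε) * φ (Y j ε))
          = 16 * ∑ i, ∑ j, a i j * (φ (X i ε)/4) * (φ (Y j ε)/4) := by
            rw [Finset.mul_sum]
            refine Finset.sum_congr rfl fun i _ => ?_
            rw [Finset.mul_sum]
            exact Finset.sum_congr rfl fun j _ => by ring
        _ ≤ 16 * K := by linarith [hcube]
    have hT1 : ∑ i, ∑ j, a i j * ((∑ ε : ι → Bool, φ (X i ε) * φ (Y j ε)) / N) ≤ 16 * K := by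
      have e : ∑ i, ∑ j, a i j * ((∑ ε : ι → Bool, φ (X i ε) * φ (Y j ε)) / N)
          = (∑ i, ∑ j, a i j * (∑ ε : ι → Bool, φ (X i ε) * φ (Y j ε))) / N := by
        rw [Finset.sum_div]
        refine Finset.sum_congr rfl fun i _ => ?_
        rw [Finset.sum_div]
        exact Finset.sum_congr rfl fun j _ => (mul_div_assoc _ _ _).symm
      rw [e, swap1, div_le_iff₀ hNpos]
      calc ∑ ε : ι → Bool, ∑ i, ∑ j, a i j * (φ (X i ε) * φ (Y j ε))
          ≤ ∑ _ε : ι → Bool, 16*K := Finset.sum_le_sum fun ε _ => per ε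
        _ = N * (16*K) := by rw [Finset.sum_const, Finset.card_univ, nsmul_eq_mul]
        _ = 16*K*N := by ring
    have hT2 : ∑ i, ∑ j, a i j * (∑ ε : ι → Bool, p i ε * q j ε) ≤
        160 * K + (9/10)^k * (n:ℝ)^2 * K :=
      IH (ι → Bool) inferInstance inferInstance p q hp hq
    have hT3 : ∑ i, ∑ j, a i j * (∑ ε : ι → Bool, p' i ε * q' j ε) ≤
        160 * K + (9/10)^k * (n:ℝ)^2 * K :=
      IH (ι → Bool) inferInstance inferInstance p' q' hp' hq'
    rw [expand, pow_succ]
    linarith [hT1, hT2, hT3]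


theorem core_limit (n : ℕ) (a : Matrix (Fin n) (Fin n) ℝ) (K : ℝ)
    (hyp : ∀ s t : Fin n → ℝ, IsSign s → IsSign t →
      (∑ i, ∑ j, a i j * s i * t j) ≤ K)
    (ι : Type) [Fintype ι] [DecidableEq ι] (x y : Fin n → ι → ℝ)
    (hx : ∀ i, ∑ t, (x i t)^2 ≤ 1) (hy : ∀ j, ∑ t, (y j t)^2 ≤ 1) :
    ∑ i, ∑ j, a i j * (∑ t, x i t * y j t) ≤ 160 * K := by
  set C : ℝ := (n:ℝ)^2 * K with hC
  have hCnn : 0 ≤ C := by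
    have := K_nonneg a K hyp
    positivity
  have hbd : ∀ k : ℕ, ∑ i, ∑ j, a i j * (∑ t, x i t * y j t) ≤ 160*K + (9/10)^k * C := by
    intro k
    have := core n a K hyp k ι inferInstance inferInstance x y hx hy
    rw [hC]
    linarith [this]
  have htend : Filter.Tendsto (fun k : ℕ => (9/10:ℝ)^k * C) Filter.atTop (nhds 0) := by
    have h0 : Filter.Tendsto (fun k : ℕ => (9/10:ℝ)^k) Filter.atTop (nhds 0) :=
      tendsto_pow_atTop_nhds_zero_of_lt_one (by norm_num) (by norm_num)
    simpa using h0.mul_const C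
  refine le_of_forall_pos_le_add fun ε hε => ?_
  obtain ⟨k, hk⟩ := (htend.eventually_lt_const hε).exists
  linarith [hbd k]



theorem key (n : ℕ) (H : Type) [NormedAddCommGroup H] [InnerProductSpace ℝ H]
    (a : Matrix (Fin n) (Fin n) ℝ) (K R R' : ℝ)
    (hR : 0 ≤ R) (hR' : 0 ≤ R')
    (hyp : ∀ s t : Fin n → ℝ, (∀ i, s i = 1 ∨ s i = -1) → (∀ j, t j = 1 ∨ t j = -1) →
      (∑ i, ∑ j, a i j * s i * t j) ≤ K)
    (S T : Fin n → H) (hS : ∀ i, ‖S i‖ ≤ R) (hT : ∀ j, ‖T j‖ ≤ R') :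
    (∑ i, ∑ j, a i j * (inner ℝ (S i) (T j) : ℝ)) ≤ 160 * K * R * R' := by
  have hK : 0 ≤ K := K_nonneg a K hyp
  rcases eq_or_lt_of_le hR with hR0 | hRpos
  · have hz : ∀ i, S i = 0 := fun i => norm_le_zero_iff.mp (by rw [← hR0] at hS; exact hS i)
    have : ∑ i, ∑ j, a i j * (inner ℝ (S i) (T j) : ℝ) = 0 := by
      refine Finset.sum_eq_zero fun i _ => Finset.sum_eq_zero fun j _ => ?_
      rw [hz i, inner_zero_left, mul_zero]
    rw [this, ← hR0]
    have h4 : (160:ℝ) * K * 0 * R' = 0 := by ring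
    rw [h4]
  rcases eq_or_lt_of_le hR' with hR'0 | hR'pos
  · have hz : ∀ j, T j = 0 := fun j => norm_le_zero_iff.mp (by rw [← hR'0] at hT; exact hT j)
    have h0 : ∑ i, ∑ j, a i j * (inner ℝ (S i) (T j) : ℝ) = 0 := by
      refine Finset.sum_eq_zero fun i _ => Finset.sum_eq_zero fun j _ => ?_
      rw [hz j, inner_zero_right, mul_zero]
    rw [h0, ← hR'0]
    have h4 : (160:ℝ) * K * R * 0 = 0 := by ring
    rw [h4]
  -- main case
  set V : Submodule ℝ H := Submodule.span ℝ (Set.range S ∪ Set.range T) with hV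
  haveI : FiniteDimensional ℝ V := by
    apply FiniteDimensional.span_of_finite
    exact (Set.finite_range S).union (Set.finite_range T)
  set b := stdOrthonormalBasis ℝ V with hb
  set S' : Fin n → V := fun i => ⟨S i, Submodule.subset_span (Or.inl ⟨i, rfl⟩)⟩ with hS'
  set T' : Fin n → V := fun j => ⟨T j, Submodule.subset_span (Or.inr ⟨j, rfl⟩)⟩ with hT'
  set x : Fin n → Fin (Module.finrank ℝ V) → ℝ :=
    fun i t => (inner ℝ (S' i) (b t) : ℝ) / R with hx
  set y : Fin n → Fin (Module.finrank ℝ V) → ℝ :=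
    fun j t => (inner ℝ (b t) (T' j) : ℝ) / R' with hy
  have hxb : ∀ i, ∑ t, (x i t)^2 ≤ 1 := by
    intro i
    have h1 : ∑ t, ((inner ℝ (S' i) (b t) : ℝ)) * (inner ℝ (b t) (S' i) : ℝ)
        = (inner ℝ (S' i) (S' i) : ℝ) := b.sum_inner_mul_inner (S' i) (S' i)
    have h2 : ∑ t, ((inner ℝ (S' i) (b t) : ℝ))^2 = ‖S i‖^2 := by
      have hcoe : (inner ℝ (S' i) (S' i) : ℝ) = (inner ℝ (S i) (S i) : ℝ) := rfl
      rw [← real_inner_self_eq_norm_sq, ← hcoe, ← h1]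
      refine Finset.sum_congr rfl fun t _ => ?_
      rw [sq, real_inner_comm (b t) (S' i)]
    have h3 : ∑ t, (x i t)^2 = (∑ t, ((inner ℝ (S' i) (b t) : ℝ))^2) / R^2 := by
      rw [Finset.sum_div]
      exact Finset.sum_congr rfl fun t _ => by rw [hx, div_pow]
    rw [h3, h2, div_le_one (by positivity)]
    nlinarith [hS i, norm_nonneg (S i)]
  have hyb : ∀ j, ∑ t, (y j t)^2 ≤ 1 := by
    intro j
    have h1 : ∑ t, ((inner ℝ (T' j) (b t) : ℝ)) * (inner ℝ (b t) (T' j) : ℝ)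
        = (inner ℝ (T' j) (T' j) : ℝ) := b.sum_inner_mul_inner (T' j) (T' j)
    have h2 : ∑ t, ((inner ℝ (b t) (T' j) : ℝ))^2 = ‖T j‖^2 := by
      have hcoe : (inner ℝ (T' j) (T' j) : ℝ) = (inner ℝ (T j) (T j) : ℝ) := rfl
      rw [← real_inner_self_eq_norm_sq, ← hcoe, ← h1]
      refine Finset.sum_congr rfl fun t _ => ?_
      rw [sq, real_inner_comm (b t) (T' j)]
    have h3 : ∑ t, (y j t)^2 = (∑ t, ((inner ℝ (b t) (T' j) : ℝ))^2) / R'^2 := by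
      rw [Finset.sum_div]
      exact Finset.sum_congr rfl fun t _ => by rw [hy, div_pow]
    rw [h3, h2, div_le_one (by positivity)]
    nlinarith [hT j, norm_nonneg (T j)]
  have hinner : ∀ i j, ∑ t, x i t * y j t = (inner ℝ (S i) (T j) : ℝ) / (R * R') := by
    intro i j
    have h1 : ∑ t, ((inner ℝ (S' i) (b t) : ℝ)) * (inner ℝ (b t) (T' j) : ℝ)
        = (inner ℝ (S' i) (T' j) : ℝ) := b.sum_inner_mul_inner (S' i) (T' j)
    have h2 : (inner ℝ (S' i) (T' j) : ℝ) = (inner ℝ (S i) (T j) : ℝ) := rfl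
    have h3 : ∑ t, x i t * y j t
        = (∑ t, ((inner ℝ (S' i) (b t) : ℝ)) * (inner ℝ (b t) (T' j) : ℝ)) / (R * R') := by
      rw [Finset.sum_div]
      refine Finset.sum_congr rfl fun t _ => ?_
      rw [hx, hy]
      field_simp
    rw [h3, h1, h2]
  have hcore := core_limit n a K hyp (Fin (Module.finrank ℝ V)) x y hxb hyb
  have heq : ∑ i, ∑ j, a i j * (∑ t, x i t * y j t)
      = (∑ i, ∑ j, a i j * (inner ℝ (S i) (T j) : ℝ)) / (R * R') := by
    rw [Finset.sum_div]
    refine Finset.sum_congr rfl fun i _ => ?_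
    rw [Finset.sum_div]
    refine Finset.sum_congr rfl fun j _ => ?_
    rw [hinner i j, mul_div_assoc]
  rw [heq, div_le_iff₀ (by positivity)] at hcore
  calc ∑ i, ∑ j, a i j * (inner ℝ (S i) (T j) : ℝ) ≤ 160 * K * (R * R') := hcore
    _ = 160 * K * R * R' := by ring

end Groth

/-- Grothendieck's inequality (rescaled form): there is a universal constant K_G > 0 such
that for any real matrix a with ∑ᵢⱼ aᵢⱼ sᵢ tⱼ ≤ K for all signs s, t ∈ {-1,1}ⁿ and any
vectors Sᵢ, Tⱼ in a real Hilbert space with ‖Sᵢ‖ ≤ R, ‖Tⱼ‖ ≤ R', one has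
∑ᵢⱼ aᵢⱼ ⟨Sᵢ, Tⱼ⟩ ≤ K_G · K · R · R'. -/
theorem grothendieck_inequality_rescaled :
    ∃ KG : ℝ, 0 < KG ∧
      ∀ (n : ℕ) (H : Type) [NormedAddCommGroup H] [InnerProductSpace ℝ H]
        (a : Matrix (Fin n) (Fin n) ℝ) (K R R' : ℝ),
        0 ≤ R → 0 ≤ R' →
        (∀ s t : Fin n → ℝ, (∀ i, s i = 1 ∨ s i = -1) → (∀ j, t j = 1 ∨ t j = -1) →
          (∑ i, ∑ j, a i j * s i * t j) ≤ K) →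
        ∀ S T : Fin n → H, (∀ i, ‖S i‖ ≤ R) → (∀ j, ‖T j‖ ≤ R') →
          (∑ i, ∑ j, a i j * (inner ℝ (S i) (T j) : ℝ)) ≤ KG * K * R * R' := by
  exact ⟨160, by norm_num, fun n H _ _ a K R R' hR hR' hyp S T hS hT =>
    Groth.key n H a K R R' hR hR' hyp S T hS hT⟩
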